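/- Let R be a commutative ring, P a projective R-module, and M a submodule of P. Suppose there exists a short exact sequence 0 → P/M → Q → P/M → 0 of R-modules with pd_R(Q) ≤ 1. Then there exists a short exact sequence 0 → M → X → M → 0 in which X is a projective R-module (X arises as the kernel of a surjection P⊕P → Q, so that 0 → X → P⊕P → Q → 0 is exact). -/

import Mathlib

noncomputable section

universe u

variable (R : Type u) [CommRing R]

/-- `IsShortExact R f g` says that `0 → A → B → C → 0` is a short exact sequence. -/
def IsShortExact {A B C : Type u} [AddCommGroup A] [Module R A] [AddCommGroup B] [Module R B]
    [AddCommGroup C] [Module R C] (f : A →ₗ[R] B) (g : B →ₗ[R] C) : Prop :=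
  Function.Injective f ∧ Function.Surjective g ∧ LinearMap.range f = LinearMap.ker g

/-- A module `M` is Gorenstein projective if there is a complete projective resolution
`⋯ → P i → P (i+1) → ⋯` (an exact sequence of projective modules which remains exact after
applying `Hom(-, Q)` for every projective module `Q`) with `M ≅ Im (P 0 → P 1)`. -/
def IsGorensteinProjective (M : Type u) [AddCommGroup M] [Module R M] : Prop :=
  ∃ (P : ℤ → Type u) (_ : ∀ i, AddCommGroup (P i)) (_ : ∀ i, Module R (P i))
    (d : ∀ i, P i →ₗ[R] P (i + 1)),
    (∀ i, Module.Projective R (P i)) ∧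
    (∀ i, LinearMap.range (d i) = LinearMap.ker (d (i + 1))) ∧
    Nonempty (M ≃ₗ[R] LinearMap.range (d 0)) ∧
    (∀ (Q : Type u) (_ : AddCommGroup Q) (_ : Module R Q), Module.Projective R Q →
      ∀ (i : ℤ) (g : P (i + 1) →ₗ[R] Q), g.comp (d i) = 0 →
        ∃ h : P (i + 1 + 1) →ₗ[R] Q, h.comp (d (i + 1)) = g)

/-- A module `M` is strongly Gorenstein projective if there is a complete projective
resolution of the form `⋯ → P →f P →f P → ⋯` with `M ≅ Im f`. -/
def IsStronglyGorensteinProjective (M : Type u) [AddCommGroup M] [Module R M] : Prop :=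
  ∃ (P : Type u) (_ : AddCommGroup P) (_ : Module R P) (f : P →ₗ[R] P),
    Module.Projective R P ∧
    LinearMap.range f = LinearMap.ker f ∧
    Nonempty (M ≃ₗ[R] LinearMap.range f) ∧
    (∀ (Q : Type u) (_ : AddCommGroup Q) (_ : Module R Q), Module.Projective R Q →
      ∀ g : P →ₗ[R] Q, g.comp f = 0 → ∃ h : P →ₗ[R] Q, h.comp f = g)

/-- A module `M` is Gorenstein flat if there is an exact sequence of flat modules
`⋯ → F i → F (i+1) → ⋯` which remains exact after applying `- ⊗ I` for every injective
module `I`, with `M ≅ Im (F 0 → F 1)`. -/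
def IsGorensteinFlat (M : Type u) [AddCommGroup M] [Module R M] : Prop :=
  ∃ (F : ℤ → Type u) (_ : ∀ i, AddCommGroup (F i)) (_ : ∀ i, Module R (F i))
    (d : ∀ i, F i →ₗ[R] F (i + 1)),
    (∀ i, Module.Flat R (F i)) ∧
    (∀ i, LinearMap.range (d i) = LinearMap.ker (d (i + 1))) ∧
    Nonempty (M ≃ₗ[R] LinearMap.range (d 0)) ∧
    (∀ (I : Type u) (_ : AddCommGroup I) (_ : Module R I), Module.Injective R I →
      ∀ i : ℤ, LinearMap.range (LinearMap.rTensor I (d i)) =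
        LinearMap.ker (LinearMap.rTensor I (d (i + 1))))

/-- A module `M` is strongly Gorenstein flat if there is an exact sequence of flat modules
of the form `⋯ → F →f F →f F → ⋯` which remains exact after applying `- ⊗ I` for every
injective module `I`, with `M ≅ Im f`. -/
def IsStronglyGorensteinFlat (M : Type u) [AddCommGroup M] [Module R M] : Prop :=
  ∃ (F : Type u) (_ : AddCommGroup F) (_ : Module R F) (f : F →ₗ[R] F),
    Module.Flat R F ∧
    LinearMap.range f = LinearMap.ker f ∧
    Nonempty (M ≃ₗ[R] LinearMap.range f) ∧
    (∀ (I : Type u) (_ : AddCommGroup I) (_ : Module R I), Module.Injective R I →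
      LinearMap.range (LinearMap.rTensor I f) = LinearMap.ker (LinearMap.rTensor I f))

/-- `ProjDimLE R M n` : the projective dimension of `M` is at most `n`, i.e. there is an exact
sequence `0 → P n → ⋯ → P 0 → M → 0` with each `P i` projective. -/
def ProjDimLE (M : Type u) [AddCommGroup M] [Module R M] (n : ℕ) : Prop :=
  ∃ (P : ℕ → Type u) (_ : ∀ i, AddCommGroup (P i)) (_ : ∀ i, Module R (P i))
    (d : ∀ i, P (i + 1) →ₗ[R] P i) (ε : P 0 →ₗ[R] M),
    (∀ i, Module.Projective R (P i)) ∧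
    (∀ i, n < i → Subsingleton (P i)) ∧
    Function.Surjective ε ∧
    LinearMap.ker ε = LinearMap.range (d 0) ∧
    (∀ i, LinearMap.ker (d i) = LinearMap.range (d (i + 1)))

/-- `InjDimLE R M n` : the injective dimension of `M` is at most `n`, i.e. there is an exact
sequence `0 → M → E 0 → ⋯ → E n → 0` with each `E i` injective. -/
def InjDimLE (M : Type u) [AddCommGroup M] [Module R M] (n : ℕ) : Prop :=
  ∃ (E : ℕ → Type u) (_ : ∀ i, AddCommGroup (E i)) (_ : ∀ i, Module R (E i))
    (d : ∀ i, E i →ₗ[R] E (i + 1)) (η : M →ₗ[R] E 0),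
    (∀ i, Module.Injective R (E i)) ∧
    (∀ i, n < i → Subsingleton (E i)) ∧
    Function.Injective η ∧
    LinearMap.range η = LinearMap.ker (d 0) ∧
    (∀ i, LinearMap.range (d i) = LinearMap.ker (d (i + 1)))

/-- `FlatDimLE R M n` : the flat dimension of `M` is at most `n`. -/
def FlatDimLE (M : Type u) [AddCommGroup M] [Module R M] (n : ℕ) : Prop :=
  ∃ (F : ℕ → Type u) (_ : ∀ i, AddCommGroup (F i)) (_ : ∀ i, Module R (F i))
    (d : ∀ i, F (i + 1) →ₗ[R] F i) (ε : F 0 →ₗ[R] M),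
    (∀ i, Module.Flat R (F i)) ∧
    (∀ i, n < i → Subsingleton (F i)) ∧
    Function.Surjective ε ∧
    LinearMap.ker ε = LinearMap.range (d 0) ∧
    (∀ i, LinearMap.ker (d i) = LinearMap.range (d (i + 1)))

/-- `GProjDimLE R M n` : the Gorenstein projective dimension of `M` is at most `n`, i.e.
there is an exact sequence `0 → G n → ⋯ → G 0 → M → 0` with each `G i` Gorenstein
projective. -/
def GProjDimLE (M : Type u) [AddCommGroup M] [Module R M] (n : ℕ) : Prop :=
  ∃ (G : ℕ → Type u) (_ : ∀ i, AddCommGroup (G i)) (_ : ∀ i, Module R (G i))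
    (d : ∀ i, G (i + 1) →ₗ[R] G i) (ε : G 0 →ₗ[R] M),
    (∀ i, IsGorensteinProjective R (G i)) ∧
    (∀ i, n < i → Subsingleton (G i)) ∧
    Function.Surjective ε ∧
    LinearMap.ker ε = LinearMap.range (d 0) ∧
    (∀ i, LinearMap.ker (d i) = LinearMap.range (d (i + 1)))

/-- `GFlatDimLE R M n` : the Gorenstein flat dimension of `M` is at most `n`. -/
def GFlatDimLE (M : Type u) [AddCommGroup M] [Module R M] (n : ℕ) : Prop :=
  ∃ (G : ℕ → Type u) (_ : ∀ i, AddCommGroup (G i)) (_ : ∀ i, Module R (G i))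
    (d : ∀ i, G (i + 1) →ₗ[R] G i) (ε : G 0 →ₗ[R] M),
    (∀ i, IsGorensteinFlat R (G i)) ∧
    (∀ i, n < i → Subsingleton (G i)) ∧
    Function.Surjective ε ∧
    LinearMap.ker ε = LinearMap.range (d 0) ∧
    (∀ i, LinearMap.ker (d i) = LinearMap.range (d (i + 1)))

/-- A module is finitely presented if it is the quotient of a finite free module by a
finitely generated submodule of relations. -/
def IsFinitelyPresented (M : Type u) [AddCommGroup M] [Module R M] : Prop :=
  ∃ (n : ℕ) (f : (Fin n → R) →ₗ[R] M), Function.Surjective f ∧ (LinearMap.ker f).FG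

/-- A ring is coherent if every finitely generated ideal is finitely presented. -/
def IsCoherentRing : Prop :=
  ∀ I : Ideal R, I.FG → IsFinitelyPresented R I

/-- `ExtVanishes R M N i` : `Ext_R^i(M, N) = 0`. -/
def ExtVanishes (M N : Type u) [AddCommGroup M] [Module R M] [AddCommGroup N] [Module R N]
    (i : ℕ) : Prop :=
  Subsingleton (((Ext R (ModuleCat.{u} R) i).obj
    (Opposite.op (ModuleCat.of R M))).obj (ModuleCat.of R N))

/-- A ring is hereditary if every submodule of a projective module is projective. -/
def IsHereditaryRing : Prop :=
  ∀ (P : Type u) (_ : AddCommGroup P) (_ : Module R P), Module.Projective R P →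
    ∀ N : Submodule R P, Module.Projective R N

/-- A ring is semihereditary if every finitely generated ideal is projective. -/
def IsSemihereditaryRing : Prop :=
  ∀ I : Ideal R, I.FG → Module.Projective R I

/-- A ring is Gorenstein hereditary if every submodule of a projective module is
Gorenstein projective. -/
def IsGHereditaryRing : Prop :=
  ∀ (P : Type u) (_ : AddCommGroup P) (_ : Module R P), Module.Projective R P →
    ∀ N : Submodule R P, IsGorensteinProjective R N

/-- A ring is strongly Gorenstein hereditary if every submodule of a projective module is
strongly Gorenstein projective. -/
def IsSGHereditaryRing : Prop :=
  ∀ (P : Type u) (_ : AddCommGroup P) (_ : Module R P), Module.Projective R P →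
    ∀ N : Submodule R P, IsStronglyGorensteinProjective R N

/-- A ring is Gorenstein semihereditary if it is coherent and every submodule of a flat
module is Gorenstein flat. -/
def IsGSemihereditaryRing : Prop :=
  IsCoherentRing R ∧
    ∀ (F : Type u) (_ : AddCommGroup F) (_ : Module R F), Module.Flat R F →
      ∀ N : Submodule R F, IsGorensteinFlat R N

/-- A ring is strongly Gorenstein semihereditary if it is coherent and every submodule of a
flat module is strongly Gorenstein flat. -/
def IsSGSemihereditaryRing : Prop :=
  IsCoherentRing R ∧
    ∀ (F : Type u) (_ : AddCommGroup F) (_ : Module R F), Module.Flat R F →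
      ∀ N : Submodule R F, IsStronglyGorensteinFlat R N

set_option maxHeartbeats 2000000 in
/-- The construction in the proof of Theorem 2.4 (2 ⇒ 1): from a self-extension of `P/M` by
a module of projective dimension at most 1, one gets a self-extension of `M` by a projective
module. -/
theorem statement_19 (R : Type u) [CommRing R]
    (P : Type u) [AddCommGroup P] [Module R P] (hP : Module.Projective R P)
    (M : Submodule R P)
    (Q : Type u) [AddCommGroup Q] [Module R Q] (hQ : ProjDimLE R Q 1)
    (a : (P ⧸ M) →ₗ[R] Q) (b : Q →ₗ[R] P ⧸ M) (hab : IsShortExact R a b) :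
    ∃ (X : Type u) (_ : AddCommGroup X) (_ : Module R X),
      Module.Projective R X ∧
        (∃ (f : M →ₗ[R] X) (g : X →ₗ[R] M), IsShortExact R f g) ∧
        (∃ (i : X →ₗ[R] P × P) (p : P × P →ₗ[R] Q), IsShortExact R i p) := by
  haveI := hP
  obtain ⟨ha, hb, hrk⟩ := hab
  obtain ⟨P', hacg, hmod, d, ε, hproj, hss, hεsurj, hker, hexact⟩ := hQ
  letI := hacg 0; letI := hacg 1; letI := hacg 2
  letI := hmod 0; letI := hmod 1; letI := hmod 2
  haveI := hproj 0; haveI := hproj 1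
  -- b ∘ a = 0
  have hba : ∀ z, b (a z) = 0 := fun z => by
    have : a z ∈ LinearMap.ker b := hrk ▸ LinearMap.mem_range_self a z
    exact this
  -- π : P → P/M
  set π : P →ₗ[R] P ⧸ M := M.mkQ with hπ
  have hπsurj : Function.Surjective π := Submodule.mkQ_surjective M
  -- lift t : P → Q of π along b
  obtain ⟨t, ht⟩ := Module.projective_lifting_property b π hb
  have ht' : ∀ x, b (t x) = π x := fun x => LinearMap.congr_fun ht x
  -- φ : P × P → Q
  set φ : P × P →ₗ[R] Q := LinearMap.coprod (a ∘ₗ π) t with hφ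
  have hφap : ∀ u : P × P, φ u = a (π u.1) + t u.2 := fun u => rfl
  have hφsurj : Function.Surjective φ := by
    intro q
    obtain ⟨y, hy⟩ := hπsurj (b q)
    have : q - t y ∈ LinearMap.ker b := by
      simp [LinearMap.mem_ker, map_sub, ht', hy]
    rw [← hrk] at this
    obtain ⟨z, hz⟩ := this
    obtain ⟨x, hx⟩ := hπsurj z
    exact ⟨(x, y), by simp [hφap, hx, hz]⟩
  -- X = ker φ
  refine ⟨LinearMap.ker φ, inferInstance, inferInstance, ?_, ?_, ?_⟩
  · -- projectivity via Schanuel's lemma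
    -- d 0 is injective
    haveI hsub2 : Subsingleton (P' 2) := hss 2 (by norm_num)
    have hd1 : d 1 = 0 := LinearMap.ext fun x => by
      rw [Subsingleton.elim x 0, map_zero]; rfl
    have hd0inj : Function.Injective (d 0) := by
      rw [← LinearMap.ker_eq_bot, hexact 0, hd1, LinearMap.range_zero]
    -- ker ε is projective
    haveI hkerε : Module.Projective R (LinearMap.ker ε) :=
      Module.Projective.of_equiv ((LinearEquiv.ofInjective (d 0) hd0inj).trans
        (LinearEquiv.ofEq _ _ hker.symm))
    -- the pullback Y
    set ψ : (P × P) × P' 0 →ₗ[R] Q :=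
      (φ ∘ₗ LinearMap.fst R (P × P) (P' 0)) - (ε ∘ₗ LinearMap.snd R (P × P) (P' 0)) with hψ
    have hYmem : ∀ y : (P × P) × P' 0, y ∈ LinearMap.ker ψ ↔ φ y.1 = ε y.2 := fun y => by
      simp [hψ, LinearMap.mem_ker, sub_eq_zero]
    set Y := LinearMap.ker ψ with hYdef
    set p1 : Y →ₗ[R] P × P := LinearMap.fst R (P × P) (P' 0) ∘ₗ Y.subtype with hp1
    set p2 : Y →ₗ[R] P' 0 := LinearMap.snd R (P × P) (P' 0) ∘ₗ Y.subtype with hp2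
    have hp1surj : Function.Surjective p1 := by
      intro u
      obtain ⟨v, hv⟩ := hεsurj (φ u)
      exact ⟨⟨(u, v), (hYmem _).mpr hv.symm⟩, rfl⟩
    have hp2surj : Function.Surjective p2 := by
      intro v
      obtain ⟨u, hu⟩ := hφsurj (ε v)
      exact ⟨⟨(u, v), (hYmem _).mpr hu⟩, rfl⟩
    -- Y is projective
    have hexact1 : Function.Exact (LinearMap.ker p1).subtype p1 :=
      LinearMap.exact_iff.mpr (Submodule.range_subtype _).symm
    obtain ⟨s1, hs1⟩ := Module.projective_lifting_property p1 LinearMap.id hp1surj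
    obtain ⟨e1, he1⟩ := @Function.Exact.splitSurjectiveEquiv R (LinearMap.ker p1) Y (P × P) _ (Submodule.addCommGroup _) _ _ _ _ _ _ _ hexact1 (LinearMap.ker p1).injective_subtype ⟨s1, hs1⟩
    haveI hkp1 : Module.Projective R (LinearMap.ker p1) := by
      refine Module.Projective.of_split
        (LinearMap.codRestrict (LinearMap.ker ε)
          (LinearMap.snd R (P × P) (P' 0) ∘ₗ Y.subtype ∘ₗ (LinearMap.ker p1).subtype) ?_)
        (LinearMap.codRestrict (LinearMap.ker p1)
          (LinearMap.codRestrict Y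
            (LinearMap.inr R (P × P) (P' 0) ∘ₗ (LinearMap.ker ε).subtype) ?_) ?_) ?_
      · intro k
        have hk1 : ((k : Y) : (P × P) × P' 0).1 = 0 := k.2
        have hkY := (hYmem _).mp (k : Y).2
        simp only [LinearMap.mem_ker, LinearMap.coe_comp, Function.comp_apply,
          Submodule.coe_subtype, LinearMap.snd_apply]
        rw [← hkY, hk1, map_zero]
      · intro v
        refine (hYmem _).mpr ?_
        simp [(LinearMap.mem_ker).mp v.2]
      · intro v
        rfl
      · apply LinearMap.ext
        intro k
        apply Subtype.ext
        apply Subtype.ext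
        refine Prod.ext ?_ rfl
        exact (k.2 : p1 (k : Y) = 0).symm
    haveI hYproj : Module.Projective R Y := Module.Projective.of_equiv e1.symm
    -- split the second sequence
    have hexact2 : Function.Exact (LinearMap.ker p2).subtype p2 :=
      LinearMap.exact_iff.mpr (Submodule.range_subtype _).symm
    obtain ⟨s2, hs2⟩ := Module.projective_lifting_property p2 LinearMap.id hp2surj
    obtain ⟨e2, he2⟩ := @Function.Exact.splitSurjectiveEquiv R (LinearMap.ker p2) Y (P' 0) _ (Submodule.addCommGroup _) _ _ _ _ _ _ _ hexact2 (LinearMap.ker p2).injective_subtype ⟨s2, hs2⟩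
    have hr2 : ∀ k : LinearMap.ker p2,
        (LinearMap.fst R (LinearMap.ker p2) (P' 0) ∘ₗ e2.toLinearMap)
          ((LinearMap.ker p2).subtype k) = k := by
      intro k
      have := LinearMap.congr_fun he2.1 k
      simp only [LinearMap.coe_comp, Function.comp_apply] at this ⊢
      rw [this]
      simp
    haveI hkp2 : Module.Projective R (LinearMap.ker p2) :=
      Module.Projective.of_split (LinearMap.ker p2).subtype
        (LinearMap.fst R (LinearMap.ker p2) (P' 0) ∘ₗ e2.toLinearMap)
        (LinearMap.ext hr2)
    -- X = ker φ is a retract of ker p2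
    have hjmem : ∀ x : LinearMap.ker φ,
        ((((x : P × P), (0 : P' 0))) : (P × P) × P' 0) ∈ Y := by
      intro x
      refine (hYmem _).mpr ?_
      simp [(LinearMap.mem_ker).mp x.2]
    refine Module.Projective.of_split
      (LinearMap.codRestrict (LinearMap.ker p2)
        (LinearMap.codRestrict Y
          (LinearMap.inl R (P × P) (P' 0) ∘ₗ (LinearMap.ker φ).subtype) hjmem) (fun x => rfl))
      (LinearMap.codRestrict (LinearMap.ker φ)
        (LinearMap.fst R (P × P) (P' 0) ∘ₗ Y.subtype ∘ₗ (LinearMap.ker p2).subtype) ?_) ?_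
    · intro k
      have hk2 : ((k : Y) : (P × P) × P' 0).2 = 0 := k.2
      have hkY := (hYmem _).mp (k : Y).2
      simp only [LinearMap.mem_ker, LinearMap.coe_comp, Function.comp_apply,
        Submodule.coe_subtype, LinearMap.fst_apply]
      rw [hkY, hk2, map_zero]
    · apply LinearMap.ext
      intro x
      exact Subtype.ext rfl
  · -- the self-extension of M
    have hmem1 : ∀ m : M, (((m : P), (0 : P)) : P × P) ∈ LinearMap.ker φ := by
      intro m
      simp [LinearMap.mem_ker, hφap, (Submodule.Quotient.mk_eq_zero M).mpr m.2,
        show π (m : P) = Submodule.Quotient.mk (m : P) from rfl]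
    refine ⟨LinearMap.codRestrict (LinearMap.ker φ)
        ((LinearMap.inl R P P) ∘ₗ M.subtype) (fun m => hmem1 m), ?_⟩
    have hmem2 : ∀ x : LinearMap.ker φ, ((x : P × P).2) ∈ M := by
      intro x
      have hx : a (π (x : P × P).1) + t (x : P × P).2 = 0 := x.2
      have : b (a (π (x : P × P).1) + t (x : P × P).2) = 0 := by rw [hx]; simp
      rw [map_add, hba, zero_add, ht'] at this
      exact (Submodule.Quotient.mk_eq_zero M).mp this
    refine ⟨LinearMap.codRestrict M ((LinearMap.snd R P P) ∘ₗ (LinearMap.ker φ).subtype)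
        hmem2, ?_, ?_, ?_⟩
    · intro m m' h
      have := congrArg (fun x : LinearMap.ker φ => (x : P × P).1) h
      exact Subtype.ext this
    · intro m
      -- t m ∈ ker b
      have : t (m : P) ∈ LinearMap.ker b := by
        simp [LinearMap.mem_ker, ht', (Submodule.Quotient.mk_eq_zero M).mpr m.2,
          show π (m : P) = Submodule.Quotient.mk (m : P) from rfl]
      rw [← hrk] at this
      obtain ⟨z, hz⟩ := this
      obtain ⟨x, hx⟩ := hπsurj (-z)
      refine ⟨⟨(x, (m : P)), ?_⟩, ?_⟩
      · simp [LinearMap.mem_ker, hφap, hx, hz]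
      · exact Subtype.ext rfl
    · apply le_antisymm
      · rintro x ⟨m, rfl⟩
        simp [LinearMap.mem_ker]
        exact Subtype.ext rfl
      · rintro x hx
        have h2 : (x : P × P).2 = 0 := congrArg Subtype.val hx
        have hx1 : a (π (x : P × P).1) = 0 := by
          have hx0 : φ (x : P × P) = 0 := x.2
          rw [hφap, h2, map_zero, add_zero] at hx0
          exact hx0
        have : π (x : P × P).1 = 0 := ha (by rw [hx1, map_zero])
        have hmem : (x : P × P).1 ∈ M := (Submodule.Quotient.mk_eq_zero M).mp this
        exact ⟨⟨_, hmem⟩, Subtype.ext (Prod.ext rfl h2.symm)⟩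
  · -- the sequence 0 → X → P×P → Q → 0
    exact ⟨(LinearMap.ker φ).subtype, φ, Subtype.val_injective, hφsurj,
      Submodule.range_subtype _⟩
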